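/- Littlewood–Offord Lemma: let n be a positive integer, let a₁, …, a_n be nonzero real numbers, and let u ∈ ℝ. Then the number of sign vectors ε ∈ {-1,1}^n satisfying ∑_{k=1}^{n} a_k ε_k = u is at most binom(n, ⌊n/2⌋). Equivalently, if ξ₁, …, ξ_n are independent uniform ±1 random variables, then ℙ(∑_{k=1}^{n} a_k ξ_k = u) ≤ 2^{−n} binom(n, ⌊n/2⌋). -/

import Mathlib

open Finset

theorem littlewood_offord (n : ℕ) (hn : 1 ≤ n) (a : Fin n → ℝ) (ha : ∀ k, a k ≠ 0)
    (u : ℝ) :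
    Nat.card {ε : Fin n → Bool //
        (∑ k, a k * (if ε k then (1 : ℝ) else -1)) = u} ≤ n.choose (n / 2) ∧
    (Nat.card {ε : Fin n → Bool //
        (∑ k, a k * (if ε k then (1 : ℝ) else -1)) = u} : ℝ) / 2 ^ n ≤
      (2 : ℝ) ^ (-(n : ℤ)) * (n.choose (n / 2) : ℝ) := by
  classical
  set b : Fin n → ℝ := fun k => |a k| with hb
  have hbpos : ∀ k, 0 < b k := fun k => abs_pos.2 (ha k)
  set v : ℝ := (u + ∑ k, b k) / 2 with hv
  set 𝒜 : Finset (Finset (Fin n)) :=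
    Finset.univ.filter (fun A => ∑ k ∈ A, b k = v) with h𝒜def
  -- the family is an antichain
  have hanti : IsAntichain (· ⊆ ·) (𝒜 : Set (Finset (Fin n))) := by
    intro A hA B hB hne hsub
    simp only [h𝒜def, coe_filter, Set.mem_setOf_eq] at hA hB
    have hAB : A ⊂ B := ⟨hsub, fun h => hne (le_antisymm hsub h)⟩
    obtain ⟨x, hxB, hxA⟩ := exists_of_ssubset hAB
    have : ∑ k ∈ A, b k < ∑ k ∈ B, b k := by
      refine Finset.sum_lt_sum_of_subset hsub hxB hxA (hbpos x) ?_
      exact fun k _ _ => (hbpos k).le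
    rw [hA.2, hB.2] at this
    exact lt_irrefl _ this
  have hsperner : 𝒜.card ≤ n.choose (n / 2) := by
    simpa using IsAntichain.sperner hanti
  -- the map from sign vectors to subsets
  set F : (Fin n → Bool) → Finset (Fin n) :=
    fun ε => Finset.univ.filter (fun k => ε k = decide (0 < a k)) with hF
  have hFsum : ∀ ε : Fin n → Bool,
      (∑ k, a k * (if ε k then (1 : ℝ) else -1)) =
        2 * (∑ k ∈ F ε, b k) - ∑ k, b k := by
    intro ε
    have : ∀ k : Fin n, a k * (if ε k then (1 : ℝ) else -1) =
        (if k ∈ F ε then 2 * b k else 0) - b k := by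
      intro k
      rcases (ha k).lt_or_gt with hk | hk
      · have hd : decide (0 < a k) = false := by simp [not_lt.2 hk.le]
        have habs : b k = -a k := abs_of_neg hk
        cases hε : ε k <;> simp [hF, hd, hε, habs] <;> ring
      · have hd : decide (0 < a k) = true := by simp [hk]
        have habs : b k = a k := abs_of_pos hk
        cases hε : ε k <;> simp [hF, hd, hε, habs] <;> ring
    rw [Finset.sum_congr rfl fun k _ => this k, Finset.sum_sub_distrib,
      Finset.sum_ite_mem, Finset.univ_inter, Finset.mul_sum]
  -- the map sends solutions into 𝒜 and is injective
  have hmem : ∀ ε : Fin n → Bool,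
      (∑ k, a k * (if ε k then (1 : ℝ) else -1)) = u → F ε ∈ 𝒜 := by
    intro ε hε
    rw [hFsum ε] at hε
    simp only [h𝒜def, mem_filter, mem_univ, true_and, hv]
    linarith
  have hinj : Function.Injective F := by
    intro ε ε' h
    funext k
    have h1 : k ∈ F ε ↔ k ∈ F ε' := by rw [h]
    simp only [hF, mem_filter, mem_univ, true_and] at h1
    cases hd : decide (0 < a k) <;> rw [hd] at h1 <;>
      cases hε : ε k <;> cases hε' : ε' k <;> simp_all
  have hcard : Nat.card {ε : Fin n → Bool //
      (∑ k, a k * (if ε k then (1 : ℝ) else -1)) = u} ≤ n.choose (n / 2) := by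
    have := Nat.card_le_card_of_injective
      (fun ε : {ε : Fin n → Bool //
          (∑ k, a k * (if ε k then (1 : ℝ) else -1)) = u} =>
        (⟨F ε.1, hmem ε.1 ε.2⟩ : {A // A ∈ 𝒜}))
      (fun x y hxy => Subtype.ext (hinj (congrArg Subtype.val hxy)))
    rw [Nat.card_eq_fintype_card (α := {A // A ∈ 𝒜}), Fintype.card_coe] at this
    exact this.trans hsperner
  refine ⟨hcard, ?_⟩
  rw [zpow_neg, zpow_natCast, ← div_eq_inv_mul, div_le_div_iff_of_pos_right (by positivity)]
  exact_mod_cast hcard
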